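/- A λI-term is strongly normalizable (every β-reduction sequence from it is finite) if and only if it is weakly normalizable (it β-reduces to some β-normal term). -/

import Mathlib

set_option maxHeartbeats 1000000


/-- Untyped λ-terms in de Bruijn representation. -/
inductive Trm : Type
  | var : ℕ → Trm
  | app : Trm → Trm → Trm
  | lam : Trm → Trm
  deriving DecidableEq

namespace Trm

/-- The set of free variables of a term (as de Bruijn indices). -/
def fv : Trm → Set ℕ
  | var n => {n}
  | app u v => fv u ∪ fv v
  | lam u => {n | n + 1 ∈ fv u}

/-- A term is closed if it has no free variables. -/
def Closed (t : Trm) : Prop := fv t = ∅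

/-- λI-terms: abstraction is allowed only on variables occurring free in the body. -/
inductive IsLI : Trm → Prop
  | var (n : ℕ) : IsLI (var n)
  | app {u v : Trm} : IsLI u → IsLI v → IsLI (app u v)
  | lam {u : Trm} : IsLI u → 0 ∈ fv u → IsLI (lam u)

/-- Lifting of free variables ≥ d. -/
def lift (d : ℕ) : Trm → Trm
  | var n => if n < d then var n else var (n + 1)
  | app u v => app (lift d u) (lift d v)
  | lam u => lam (lift (d + 1) u)

def liftTimes (k : ℕ) (t : Trm) : Trm := (lift 0)^[k] t

/-- Capture-avoiding substitution of the k-th free variable. -/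
def subst : Trm → ℕ → Trm → Trm
  | var n, k, v => if n < k then var n else if n = k then liftTimes k v else var (n - 1)
  | app a b, k, v => app (subst a k v) (subst b k v)
  | lam a, k, v => lam (subst a (k + 1) v)

end Trm

/-- One step of β-reduction. -/
inductive Beta : Trm → Trm → Prop
  | beta {u v : Trm} : Beta (.app (.lam u) v) (u.subst 0 v)
  | appL {u u' v : Trm} : Beta u u' → Beta (.app u v) (.app u' v)
  | appR {u v v' : Trm} : Beta v v' → Beta (.app u v) (.app u v')
  | lam {u u' : Trm} : Beta u u' → Beta (.lam u) (.lam u')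

/-- One step of η-reduction: λx (u)x → u when x ∉ Fv(u). -/
inductive Eta : Trm → Trm → Prop
  | eta (u : Trm) : Eta (.lam (.app (u.lift 0) (.var 0))) u
  | appL {u u' v : Trm} : Eta u u' → Eta (.app u v) (.app u' v)
  | appR {u v v' : Trm} : Eta v v' → Eta (.app u v) (.app u v')
  | lam {u u' : Trm} : Eta u u' → Eta (.lam u) (.lam u')

/-- β-reduction (reflexive-transitive closure). -/
def BetaStar : Trm → Trm → Prop := Relation.ReflTransGen Beta

/-- βη-reduction (reflexive-transitive closure of the union of β and η). -/
def BetaEtaStar : Trm → Trm → Prop := Relation.ReflTransGen (fun a b => Beta a b ∨ Eta a b)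

/-- η-reduction (reflexive-transitive closure). -/
def EtaStar : Trm → Trm → Prop := Relation.ReflTransGen Eta

/-- A term is β-normal iff it contains no β-redex. -/
def BetaNormal (t : Trm) : Prop := ∀ u, ¬ Beta t u

/-- A term is βη-normal iff it contains neither a β-redex nor an η-redex. -/
def BetaEtaNormal (t : Trm) : Prop := ∀ u, ¬ Beta t u ∧ ¬ Eta t u

/-- A term is strongly normalizable iff every β-reduction sequence from it is finite. -/
def StronglyNormalizable (t : Trm) : Prop :=
  ¬ ∃ f : ℕ → Trm, f 0 = t ∧ ∀ n, Beta (f n) (f (n + 1))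

namespace Trm

lemma lift_var_lt {n d : ℕ} (h : n < d) : lift d (var n) = var n := by simp [lift, h]
lemma lift_var_ge {n d : ℕ} (h : d ≤ n) : lift d (var n) = var (n+1) := by
  simp [lift]; omega
lemma subst_var_lt {n k : ℕ} (v : Trm) (h : n < k) : subst (var n) k v = var n := by
  simp [subst, h]
lemma subst_var_eq (k : ℕ) (v : Trm) : subst (var k) k v = liftTimes k v := by
  simp [subst]
lemma subst_var_gt {n k : ℕ} (v : Trm) (h : k < n) : subst (var n) k v = var (n-1) := by
  rw [subst, if_neg (by omega), if_neg (by omega)]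

lemma lift_lift {i j : ℕ} (h : i ≤ j) : ∀ t : Trm, lift i (lift j t) = lift (j+1) (lift i t) := by
  intro t
  induction t generalizing i j with
  | var n =>
    simp only [lift]
    split_ifs <;> simp only [lift] <;> split_ifs <;> first | rfl | omega
  | app a b iha ihb => simp [lift, iha h, ihb h]
  | lam a ih => simp [lift, ih (by omega : i+1 ≤ j+1)]

lemma liftTimes_succ (k : ℕ) (t : Trm) : liftTimes (k+1) t = lift 0 (liftTimes k t) := by
  simp [liftTimes, Function.iterate_succ_apply']

lemma lift_liftTimes_le {d j : ℕ} (h : d ≤ j) (v : Trm) :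
    lift d (liftTimes j v) = liftTimes (j+1) v := by
  induction j generalizing d with
  | zero =>
    interval_cases d
    simp [liftTimes]
  | succ j ih =>
    rcases Nat.eq_zero_or_pos d with rfl | hd
    · rw [← liftTimes_succ]
    · obtain ⟨d, rfl⟩ : ∃ d', d = d' + 1 := ⟨d-1, by omega⟩
      rw [liftTimes_succ, ← lift_lift (by omega : 0 ≤ d), ih (by omega), ← liftTimes_succ]

lemma lift_liftTimes_ge {d j : ℕ} (h : j ≤ d) (v : Trm) :
    lift d (liftTimes j v) = liftTimes j (lift (d - j) v) := by
  induction j generalizing d with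
  | zero => simp [liftTimes]
  | succ j ih =>
    obtain ⟨d, rfl⟩ : ∃ d', d = d' + 1 := ⟨d-1, by omega⟩
    have e : d + 1 - (j + 1) = d - j := by omega
    rw [e, liftTimes_succ, ← lift_lift (by omega : 0 ≤ d), ih (by omega), ← liftTimes_succ]

lemma subst_lift_eq (d : ℕ) (u : Trm) : ∀ t : Trm, subst (lift d t) d u = t := by
  intro t
  induction t generalizing d with
  | var n =>
    rcases lt_or_ge n d with h1 | h1
    · rw [lift_var_lt h1, subst_var_lt _ h1]
    · rw [lift_var_ge h1, subst_var_gt _ (by omega)]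
      simp
  | app a b iha ihb => simp [lift, subst, iha, ihb]
  | lam a ih => simp [lift, subst, ih]

lemma subst_lift_comm {d j : ℕ} (h : d ≤ j) (v : Trm) :
    ∀ t : Trm, subst (lift d t) (j+1) v = lift d (subst t j v) := by
  intro t
  induction t generalizing d j with
  | var n =>
    rcases lt_or_ge n d with h1 | h1
    · rw [lift_var_lt h1, subst_var_lt _ (by omega), subst_var_lt _ (by omega), lift_var_lt h1]
    · rcases lt_trichotomy n j with h2 | rfl | h2
      · rw [lift_var_ge h1, subst_var_lt _ (by omega), subst_var_lt _ h2, lift_var_ge h1]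
      · rw [lift_var_ge h1, subst_var_eq, subst_var_eq, lift_liftTimes_le h]
      · rw [lift_var_ge h1, subst_var_gt _ (by omega), subst_var_gt _ h2,
          lift_var_ge (by omega)]
        congr 1
        omega
  | app a b iha ihb => simp [lift, subst, iha h, ihb h]
  | lam a ih => simp [lift, subst, ih (by omega : d+1 ≤ j+1)]

lemma subst_liftTimes {i j : ℕ} (h : i ≤ j) (w v : Trm) :
    subst (liftTimes i w) j v = liftTimes i (subst w (j - i) v) := by
  induction i generalizing j with
  | zero => simp [liftTimes]
  | succ i ih =>
    obtain ⟨j, rfl⟩ : ∃ j', j = j' + 1 := ⟨j-1, by omega⟩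
    have e : j + 1 - (i + 1) = j - i := by omega
    rw [e, liftTimes_succ, subst_lift_comm (by omega : 0 ≤ j), ih (by omega), ← liftTimes_succ]

lemma subst_liftTimes_cancel {i j : ℕ} (h : i ≤ j) (v u : Trm) :
    subst (liftTimes (j+1) v) i u = liftTimes j v := by
  rw [← lift_liftTimes_le h, subst_lift_eq]

lemma lift_subst {j d : ℕ} (h : j ≤ d) (w : Trm) :
    ∀ t : Trm, lift d (subst t j w) = subst (lift (d+1) t) j (lift (d - j) w) := by
  intro t
  induction t generalizing j d with
  | var n =>
    rcases lt_trichotomy n j with h1 | rfl | h1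
    · rw [subst_var_lt _ h1, lift_var_lt (by omega), lift_var_lt (by omega), subst_var_lt _ h1]
    · rw [subst_var_eq, lift_var_lt (by omega), subst_var_eq, lift_liftTimes_ge h]
    · rcases lt_or_ge n (d+1) with h2 | h2
      · rw [subst_var_gt _ h1, lift_var_lt (by omega), lift_var_lt h2, subst_var_gt _ h1]
      · rw [subst_var_gt _ h1, lift_var_ge (by omega), lift_var_ge h2, subst_var_gt _ (by omega)]
        congr 1
        omega
  | app a b iha ihb => simp [lift, subst, iha h, ihb h]
  | lam a ih => simp [lift, subst, ih (by omega : j+1 ≤ d+1)]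

lemma subst_subst {i j : ℕ} (h : i ≤ j) (w v : Trm) :
    ∀ t : Trm, subst (subst t i w) j v = subst (subst t (j+1) v) i (subst w (j - i) v) := by
  intro t
  induction t generalizing i j with
  | var n =>
    rcases lt_trichotomy n i with h1 | rfl | h1
    · rw [subst_var_lt _ h1, subst_var_lt _ (by omega), subst_var_lt _ (by omega),
        subst_var_lt _ h1]
    · rw [subst_var_eq, subst_liftTimes h, subst_var_lt _ (by omega), subst_var_eq]
    · rcases lt_trichotomy n (j+1) with h2 | rfl | h2
      · rw [subst_var_gt _ h1, subst_var_lt _ (by omega), subst_var_lt _ h2,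
          subst_var_gt _ h1]
      · rw [subst_var_gt _ h1]
        simp only [Nat.add_sub_cancel]
        rw [subst_var_eq, subst_var_eq, subst_liftTimes_cancel h]
      · rw [subst_var_gt _ h1, subst_var_gt _ (by omega), subst_var_gt _ h2,
          subst_var_gt _ (by omega)]
  | app a b iha ihb => simp [subst, iha h, ihb h]
  | lam a ih => simpa [subst] using ih (by omega : i+1 ≤ j+1)

end Trm
namespace Trm

lemma mem_fv_lift {d n : ℕ} : ∀ t : Trm, n ∈ fv (lift d t) ↔
    (n < d ∧ n ∈ fv t) ∨ (d < n ∧ n - 1 ∈ fv t) := by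
  intro t
  induction t generalizing d n with
  | var j =>
    rcases lt_or_ge j d with h1 | h1
    · rw [lift_var_lt h1]
      simp only [fv, Set.mem_singleton_iff]
      constructor
      · rintro rfl; exact Or.inl ⟨h1, rfl⟩
      · rintro (⟨_, rfl⟩ | ⟨h2, h3⟩) <;> omega
    · rw [lift_var_ge h1]
      simp only [fv, Set.mem_singleton_iff]
      constructor
      · rintro rfl; exact Or.inr ⟨by omega, by omega⟩
      · rintro (⟨h2, rfl⟩ | ⟨h2, h3⟩) <;> omega
  | app a b iha ihb =>
    simp only [lift, fv, Set.mem_union, iha, ihb]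
    tauto
  | lam a ih =>
    simp only [lift, fv, Set.mem_setOf_eq, ih]
    constructor
    · rintro (⟨h1, h2⟩ | ⟨h1, h2⟩)
      · exact Or.inl ⟨by omega, h2⟩
      · refine Or.inr ⟨by omega, ?_⟩
        have e : n - 1 + 1 = n := by omega
        rw [e]
        simpa using h2
    · rintro (⟨h1, h2⟩ | ⟨h1, h2⟩)
      · exact Or.inl ⟨by omega, h2⟩
      · refine Or.inr ⟨by omega, ?_⟩
        have e : n - 1 + 1 = n := by omega
        rw [e] at h2
        simpa using h2

lemma mem_fv_liftTimes {k n : ℕ} (v : Trm) :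
    n ∈ fv (liftTimes k v) ↔ ∃ m ∈ fv v, n = m + k := by
  induction k generalizing n with
  | zero => simp [liftTimes]
  | succ k ih =>
    rw [liftTimes_succ, mem_fv_lift]
    constructor
    · rintro (⟨h, _⟩ | ⟨h1, h2⟩)
      · omega
      · obtain ⟨m, hm, he⟩ := ih.mp h2
        exact ⟨m, hm, by omega⟩
    · rintro ⟨m, hm, rfl⟩
      exact Or.inr ⟨by omega, ih.mpr ⟨m, hm, by omega⟩⟩

lemma mem_fv_subst {k n : ℕ} (v : Trm) : ∀ t : Trm, n ∈ fv (subst t k v) ↔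
    (n < k ∧ n ∈ fv t) ∨ (k ≤ n ∧ n + 1 ∈ fv t) ∨ (k ∈ fv t ∧ ∃ m ∈ fv v, n = m + k) := by
  intro t
  induction t generalizing k n with
  | var j =>
    rcases lt_trichotomy j k with h1 | rfl | h1
    · rw [subst_var_lt _ h1]
      simp only [fv, Set.mem_singleton_iff]
      constructor
      · rintro rfl; exact Or.inl ⟨h1, rfl⟩
      · rintro (⟨_, rfl⟩ | ⟨h2, h3⟩ | ⟨h2, _⟩) <;> omega
    · rw [subst_var_eq]
      rw [mem_fv_liftTimes]
      simp only [fv, Set.mem_singleton_iff]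
      constructor
      · intro h; exact Or.inr (Or.inr ⟨trivial, h⟩)
      · rintro (⟨h2, h3⟩ | ⟨h2, h3⟩ | ⟨_, h2⟩) <;> first | omega | exact h2
    · rw [subst_var_gt _ h1]
      simp only [fv, Set.mem_singleton_iff]
      constructor
      · rintro rfl; exact Or.inr (Or.inl ⟨by omega, by omega⟩)
      · rintro (⟨h2, rfl⟩ | ⟨h2, h3⟩ | ⟨h2, _⟩) <;> omega
  | app a b iha ihb =>
    simp only [subst, fv, Set.mem_union, iha, ihb]
    constructor
    · rintro (h | h)
      · rcases h with ⟨h1, h2⟩ | ⟨h1, h2⟩ | ⟨h1, h2⟩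
        · exact Or.inl ⟨h1, Or.inl h2⟩
        · exact Or.inr (Or.inl ⟨h1, Or.inl h2⟩)
        · exact Or.inr (Or.inr ⟨Or.inl h1, h2⟩)
      · rcases h with ⟨h1, h2⟩ | ⟨h1, h2⟩ | ⟨h1, h2⟩
        · exact Or.inl ⟨h1, Or.inr h2⟩
        · exact Or.inr (Or.inl ⟨h1, Or.inr h2⟩)
        · exact Or.inr (Or.inr ⟨Or.inr h1, h2⟩)
    · rintro (⟨h1, h2 | h2⟩ | ⟨h1, h2 | h2⟩ | ⟨h1 | h1, h2⟩)
      · exact Or.inl (Or.inl ⟨h1, h2⟩)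
      · exact Or.inr (Or.inl ⟨h1, h2⟩)
      · exact Or.inl (Or.inr (Or.inl ⟨h1, h2⟩))
      · exact Or.inr (Or.inr (Or.inl ⟨h1, h2⟩))
      · exact Or.inl (Or.inr (Or.inr ⟨h1, h2⟩))
      · exact Or.inr (Or.inr (Or.inr ⟨h1, h2⟩))
  | lam a ih =>
    simp only [subst, fv, Set.mem_setOf_eq, ih]
    constructor
    · rintro (⟨h1, h2⟩ | ⟨h1, h2⟩ | ⟨h1, m, hm, he⟩)
      · exact Or.inl ⟨by omega, h2⟩
      · exact Or.inr (Or.inl ⟨by omega, h2⟩)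
      · exact Or.inr (Or.inr ⟨h1, m, hm, by omega⟩)
    · rintro (⟨h1, h2⟩ | ⟨h1, h2⟩ | ⟨h1, m, hm, he⟩)
      · exact Or.inl ⟨by omega, h2⟩
      · exact Or.inr (Or.inl ⟨by omega, h2⟩)
      · exact Or.inr (Or.inr ⟨h1, m, hm, by omega⟩)

lemma mem_fv_subst_zero {n : ℕ} (v u : Trm) :
    n ∈ fv (subst u 0 v) ↔ (n + 1 ∈ fv u) ∨ (0 ∈ fv u ∧ n ∈ fv v) := by
  rw [mem_fv_subst]
  constructor
  · rintro (⟨h, _⟩ | ⟨_, h⟩ | ⟨h1, m, hm, rfl⟩)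
    · omega
    · exact Or.inl h
    · simpa using Or.inr ⟨h1, hm⟩
  · rintro (h | ⟨h1, h2⟩)
    · exact Or.inr (Or.inl ⟨by omega, h⟩)
    · exact Or.inr (Or.inr ⟨h1, n, h2, by omega⟩)

end Trm
open Trm Relation

lemma beta_lift {a a' : Trm} (h : Beta a a') : ∀ d, Beta (lift d a) (lift d a') := by
  induction h with
  | @beta u v =>
    intro d
    have e : lift d (subst u 0 v) = subst (lift (d+1) u) 0 (lift d v) := by
      simpa using lift_subst (by omega : 0 ≤ d) v u
    rw [e]
    exact Beta.beta
  | appL _ ih => intro d; exact Beta.appL (ih d)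
  | appR _ ih => intro d; exact Beta.appR (ih d)
  | lam _ ih => intro d; exact Beta.lam (ih (d+1))

lemma beta_liftTimes {a a' : Trm} (h : Beta a a') (k : ℕ) :
    Beta (liftTimes k a) (liftTimes k a') := by
  induction k with
  | zero => exact h
  | succ k ih => rw [liftTimes_succ, liftTimes_succ]; exact beta_lift ih 0

lemma beta_subst_left {a a' : Trm} (h : Beta a a') (v : Trm) :
    ∀ k, Beta (subst a k v) (subst a' k v) := by
  induction h with
  | @beta u w =>
    intro k
    have e : subst (subst u 0 w) k v = subst (subst u (k+1) v) 0 (subst w k v) := by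
      simpa using subst_subst (by omega : 0 ≤ k) w v u
    rw [e]
    exact (by simpa [Trm.subst] using Beta.beta :
      Beta (subst (Trm.app (Trm.lam u) w) k v) (subst (subst u (k+1) v) 0 (subst w k v)))
  | appL _ ih => intro k; exact Beta.appL (ih k)
  | appR _ ih => intro k; exact Beta.appR (ih k)
  | lam _ ih => intro k; exact Beta.lam (ih (k+1))

/-- `BetaStar` congruences. -/
lemma betaStar_appL {a a' : Trm} (h : BetaStar a a') (b : Trm) :
    BetaStar (.app a b) (.app a' b) :=
  ReflTransGen.lift (fun x => Trm.app x b) (fun _ _ hb => Beta.appL hb) _ _ h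

lemma betaStar_appR {b b' : Trm} (h : BetaStar b b') (a : Trm) :
    BetaStar (.app a b) (.app a b') :=
  ReflTransGen.lift (fun x => Trm.app a x) (fun _ _ hb => Beta.appR hb) _ _ h

lemma betaStar_lam {a a' : Trm} (h : BetaStar a a') : BetaStar (.lam a) (.lam a') :=
  ReflTransGen.lift Trm.lam (fun _ _ hb => Beta.lam hb) _ _ h

lemma transGen_beta_appL {a a' : Trm} (h : TransGen Beta a a') (b : Trm) :
    TransGen Beta (.app a b) (.app a' b) :=
  TransGen.lift (fun x => Trm.app x b) (fun _ _ hb => Beta.appL hb) _ _ h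

/-- Substitution in the argument: zero or more steps in general,
at least one step if the variable occurs. -/
lemma beta_subst_right {v v' : Trm} (h : Beta v v') :
    ∀ (t : Trm) (k : ℕ), ReflTransGen Beta (subst t k v) (subst t k v') ∧
      (k ∈ fv t → TransGen Beta (subst t k v) (subst t k v')) := by
  intro t
  induction t with
  | var n =>
    intro k
    rcases lt_trichotomy n k with h1 | rfl | h1
    · rw [subst_var_lt _ h1, subst_var_lt _ h1]
      refine ⟨ReflTransGen.refl, ?_⟩
      intro hk
      simp only [fv, Set.mem_singleton_iff] at hk
      omega
    · rw [subst_var_eq, subst_var_eq]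
      exact ⟨ReflTransGen.single (beta_liftTimes h n),
        fun _ => TransGen.single (beta_liftTimes h n)⟩
    · rw [subst_var_gt _ h1, subst_var_gt _ h1]
      refine ⟨ReflTransGen.refl, ?_⟩
      intro hk
      simp only [fv, Set.mem_singleton_iff] at hk
      omega
  | app a b iha ihb =>
    intro k
    have hstar : ReflTransGen Beta (subst (.app a b) k v) (subst (.app a b) k v') := by
      simp only [Trm.subst]
      exact ReflTransGen.trans (betaStar_appL (iha k).1 _) (betaStar_appR (ihb k).1 _)
    refine ⟨hstar, ?_⟩
    intro hk
    simp only [fv, Set.mem_union] at hk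
    simp only [Trm.subst]
    rcases hk with hk | hk
    · exact TransGen.trans_left (transGen_beta_appL ((iha k).2 hk) _)
        (betaStar_appR (ihb k).1 _)
    · exact TransGen.trans_right (betaStar_appL (iha k).1 _)
        (TransGen.lift (fun x => Trm.app (subst a k v') x) (fun _ _ hb => Beta.appR hb)
          _ _ ((ihb k).2 hk))
  | lam a ih =>
    intro k
    have h1 := ih (k+1)
    refine ⟨?_, ?_⟩
    · simpa only [Trm.subst, BetaStar] using betaStar_lam h1.1
    · intro hk
      simp only [fv, Set.mem_setOf_eq] at hk
      simpa only [Trm.subst] using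
        TransGen.lift Trm.lam (fun _ _ hb => Beta.lam hb) _ _ (h1.2 hk)

/-- λI is preserved by lifting. -/
lemma isLI_lift {t : Trm} (h : IsLI t) : ∀ d, IsLI (lift d t) := by
  induction h with
  | var n => intro d; unfold lift; split_ifs <;> exact IsLI.var _
  | app ha hb iha ihb => intro d; exact IsLI.app (iha d) (ihb d)
  | @lam u hu h0 ih =>
    intro d
    refine IsLI.lam (ih (d+1)) ?_
    rw [mem_fv_lift]
    exact Or.inl ⟨by omega, h0⟩

lemma isLI_liftTimes {t : Trm} (h : IsLI t) (k : ℕ) : IsLI (liftTimes k t) := by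
  induction k with
  | zero => exact h
  | succ k ih => rw [liftTimes_succ]; exact isLI_lift ih 0

lemma isLI_subst {t : Trm} (ht : IsLI t) {v : Trm} (hv : IsLI v) :
    ∀ k, IsLI (subst t k v) := by
  induction ht with
  | var n =>
    intro k
    rcases lt_trichotomy n k with h1 | rfl | h1
    · rw [subst_var_lt _ h1]; exact IsLI.var _
    · rw [subst_var_eq]; exact isLI_liftTimes hv _
    · rw [subst_var_gt _ h1]; exact IsLI.var _
  | app ha hb iha ihb => intro k; exact IsLI.app (iha k) (ihb k)
  | @lam u hu h0 ih =>
    intro k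
    refine IsLI.lam (ih (k+1)) ?_
    rw [mem_fv_subst]
    exact Or.inl ⟨by omega, h0⟩

/-- For λI terms, β-reduction preserves free variables. -/
lemma fv_beta {t t' : Trm} (h : Beta t t') (ht : IsLI t) : fv t' = fv t := by
  induction h with
  | @beta u v =>
    obtain ⟨hlu, hv⟩ : IsLI (.lam u) ∧ IsLI v := by cases ht with | app h1 h2 => exact ⟨h1, h2⟩
    obtain ⟨hu, h0⟩ : IsLI u ∧ 0 ∈ fv u := by cases hlu with | lam h1 h2 => exact ⟨h1, h2⟩
    ext n
    rw [mem_fv_subst_zero]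
    simp only [fv, Set.mem_union, Set.mem_setOf_eq]
    tauto
  | appL hb ih =>
    cases ht with
    | app ha hb' =>
      simp only [fv]
      rw [ih ha]
  | appR hb ih =>
    cases ht with
    | app ha hb' =>
      simp only [fv]
      rw [ih hb']
  | lam hb ih =>
    cases ht with
    | lam hu h0 =>
      simp only [fv]
      rw [ih hu]

/-- λI is preserved by β-reduction. -/
lemma isLI_beta {t t' : Trm} (h : Beta t t') (ht : IsLI t) : IsLI t' := by
  induction h with
  | @beta u v =>
    obtain ⟨hlu, hv⟩ : IsLI (.lam u) ∧ IsLI v := by cases ht with | app h1 h2 => exact ⟨h1, h2⟩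
    obtain ⟨hu, h0⟩ : IsLI u ∧ 0 ∈ fv u := by cases hlu with | lam h1 h2 => exact ⟨h1, h2⟩
    exact isLI_subst hu hv 0
  | appL hb ih =>
    cases ht with
    | app ha hb' => exact IsLI.app (ih ha) hb'
  | appR hb ih =>
    cases ht with
    | app ha hb' => exact IsLI.app ha (ih hb')
  | @lam u u' hb ih =>
    cases ht with
    | lam hu h0 =>
      refine IsLI.lam (ih hu) ?_
      rwa [fv_beta hb hu]

lemma isLI_betaStar {t t' : Trm} (h : BetaStar t t') (ht : IsLI t) : IsLI t' := by
  induction h with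
  | refl => exact ht
  | tail _ hstep ih => exact isLI_beta hstep ih
open Trm Relation

/-- SN phrased via accessibility. -/
def SNA (t : Trm) : Prop := Acc (fun a b => Beta b a) t

lemma accMono {α : Type*} {r1 r2 : α → α → Prop} (h : ∀ a b, r1 a b → r2 a b) :
    ∀ {x}, Acc r2 x → Acc r1 x := by
  intro x h2
  induction h2 with
  | intro x hx ih => exact ⟨x, fun y hy => ih y (h y x hy)⟩

lemma tgFlip {α : Type*} {r : α → α → Prop} {a b : α} (h : TransGen r a b) :
    TransGen (fun x y => r y x) b a := by
  induction h with
  | single h => exact TransGen.single h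
  | tail h1 h2 ih => exact TransGen.head h2 ih

lemma snVar (n : ℕ) : SNA (.var n) := ⟨_, fun y hy => by cases hy⟩

lemma snLam {u : Trm} (h : SNA u) : SNA (.lam u) := by
  induction h with
  | intro x hx ih =>
    constructor
    intro y hy
    cases hy with
    | lam hstep => exact ih _ hstep

/-- Application spine. -/
def appSpine (t : Trm) (l : List Trm) : Trm := l.foldl Trm.app t

lemma appSpine_cons (t x : Trm) (l : List Trm) :
    appSpine t (x :: l) = appSpine (.app t x) l := rfl

lemma appSpine_append (t b : Trm) (l : List Trm) :
    appSpine t (l ++ [b]) = .app (appSpine t l) b := by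
  simp [appSpine]

inductive ListStep : List Trm → List Trm → Prop
  | head {x x' : Trm} {xs : List Trm} : Beta x x' → ListStep (x :: xs) (x' :: xs)
  | tail {x : Trm} {xs xs' : List Trm} : ListStep xs xs' → ListStep (x :: xs) (x :: xs')

lemma beta_appSpine_left {t t' : Trm} (h : Beta t t') :
    ∀ l, Beta (appSpine t l) (appSpine t' l) := by
  intro l
  induction l generalizing t t' with
  | nil => exact h
  | cons x xs ih => exact ih (Beta.appL h)

lemma transGen_appSpine_left {t t' : Trm} (h : TransGen Beta t t') (l : List Trm) :
    TransGen Beta (appSpine t l) (appSpine t' l) :=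
  TransGen.lift (fun x => appSpine x l) (fun _ _ hb => beta_appSpine_left hb l) _ _ h

lemma listStep_appSpine {l l' : List Trm} (h : ListStep l l') :
    ∀ t, Beta (appSpine t l) (appSpine t l') := by
  induction h with
  | head hb => intro t; exact beta_appSpine_left (Beta.appR hb) _
  | tail h ih => intro t; exact ih _

lemma listStep_isLI {l l' : List Trm} (h : ListStep l l') (hl : ∀ x ∈ l, IsLI x) :
    ∀ x ∈ l', IsLI x := by
  induction h with
  | head hb =>
    intro z hz
    rcases List.mem_cons.mp hz with rfl | hz
    · exact isLI_beta hb (hl _ (by simp))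
    · exact hl _ (by simp [hz])
  | tail h ih =>
    intro z hz
    rcases List.mem_cons.mp hz with rfl | hz
    · exact hl _ (by simp)
    · exact ih (fun y hy => hl _ (by simp [hy])) _ hz

lemma appSpine_reduct : ∀ (l : List Trm) (t r : Trm), Beta (appSpine t l) r →
    (∃ t', Beta t t' ∧ r = appSpine t' l) ∨
    (∃ l', ListStep l l' ∧ r = appSpine t l') ∨
    (∃ u x xs, t = Trm.lam u ∧ l = x :: xs ∧ r = appSpine (subst u 0 x) xs) := by
  intro l
  induction l with
  | nil => exact fun t r h => Or.inl ⟨r, h, rfl⟩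
  | cons x xs ih =>
    intro t r h
    rcases ih (Trm.app t x) r h with ⟨t', ht', rfl⟩ | ⟨l', hl', rfl⟩ | ⟨u, y, ys, he, hc, hr⟩
    · cases ht' with
      | beta => exact Or.inr (Or.inr ⟨_, x, xs, rfl, rfl, rfl⟩)
      | appL h1 => exact Or.inl ⟨_, h1, rfl⟩
      | appR h1 => exact Or.inr (Or.inl ⟨_, ListStep.head h1, rfl⟩)
    · exact Or.inr (Or.inl ⟨x :: l', ListStep.tail hl', rfl⟩)
    · simp at he

/-- The main lemma: head expansion preserves SN for λI terms. -/
lemma mainLemma : ∀ s : Trm, Acc (TransGen (fun a b => Beta b a)) s →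
    ∀ (P Q : Trm) (l : List Trm), IsLI P → IsLI Q → (∀ x ∈ l, IsLI x) → 0 ∈ fv P →
    s = appSpine (subst P 0 Q) l → SNA (appSpine (.app (.lam P) Q) l) := by
  intro s hacc
  induction hacc with
  | intro s hs ih =>
    rintro P Q l hP hQ hl h0 rfl
    constructor
    intro r hr
    rcases appSpine_reduct l _ r hr with ⟨t', ht', rfl⟩ | ⟨l', hl', rfl⟩ | ⟨u, y, ys, he, _, _⟩
    · cases ht' with
      | beta =>
        exact accMono (fun a b h => TransGen.single h) (Acc.intro _ hs)
      | appL h1 =>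
        cases h1 with
        | lam h2 =>
          refine ih _ (TransGen.single (beta_appSpine_left (beta_subst_left h2 Q 0) l))
            _ Q l (isLI_beta h2 hP) hQ hl ?_ rfl
          rw [fv_beta h2 hP]
          exact h0
      | appR h1 =>
        refine ih _ (tgFlip (transGen_appSpine_left ((beta_subst_right h1 P 0).2 h0) l))
          P _ l hP (isLI_beta h1 hQ) hl h0 rfl
    · exact ih _ (TransGen.single (listStep_appSpine hl' _))
        P Q l' hP hQ (listStep_isLI hl' hl) h0 rfl
    · simp at he
open Trm Relation

/-- Head reduction step. -/
inductive Hap : Trm → Trm → Prop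
  | beta {u v : Trm} : Hap (.app (.lam u) v) (subst u 0 v)
  | app {a a' b : Trm} : Hap a a' → Hap (.app a b) (.app a' b)

def HapStar : Trm → Trm → Prop := ReflTransGen Hap

lemma hap_beta {a a' : Trm} (h : Hap a a') : Beta a a' := by
  induction h with
  | beta => exact Beta.beta
  | app _ ih => exact Beta.appL ih

lemma hap_decomp {M M' : Trm} (h : Hap M M') :
    ∃ P Q l, M = appSpine (.app (.lam P) Q) l ∧ M' = appSpine (subst P 0 Q) l := by
  induction h with
  | @beta u v => exact ⟨u, v, [], rfl, rfl⟩
  | @app a a' b _ ih =>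
    obtain ⟨P, Q, l, rfl, rfl⟩ := ih
    exact ⟨P, Q, l ++ [b], by rw [appSpine_append], by rw [appSpine_append]⟩

lemma isLI_appSpine : ∀ (l : List Trm) (t : Trm), IsLI (appSpine t l) →
    IsLI t ∧ ∀ x ∈ l, IsLI x := by
  intro l
  induction l with
  | nil => exact fun t h => ⟨h, by simp⟩
  | cons x xs ih =>
    intro t h
    obtain ⟨hax, hxs⟩ := ih (.app t x) h
    cases hax with
    | app h1 h2 =>
      refine ⟨h1, ?_⟩
      intro z hz
      rcases List.mem_cons.mp hz with rfl | hz
      · exact h2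
      · exact hxs _ hz

lemma hapSN {M M' : Trm} (hM : IsLI M) (h : Hap M M') (hsn : SNA M') : SNA M := by
  obtain ⟨P, Q, l, rfl, rfl⟩ := hap_decomp h
  obtain ⟨hPQ, hl⟩ := isLI_appSpine l _ hM
  cases hPQ with
  | app hlP hQ =>
    cases hlP with
    | lam hP h0 => exact mainLemma _ (Acc.transGen hsn) P Q l hP hQ hl h0 rfl

lemma hapStar_sn {M M' : Trm} (h : HapStar M M') (hM : IsLI M) (hsn : SNA M') : SNA M := by
  induction h using ReflTransGen.head_induction_on with
  | refl => exact hsn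
  | head hstep htail ih =>
    rename_i a c
    exact hapSN hM hstep (ih (isLI_beta (hap_beta hstep) hM))

lemma hapStar_isLI {M M' : Trm} (h : HapStar M M') (hM : IsLI M) : IsLI M' := by
  induction h with
  | refl => exact hM
  | tail _ hstep ih => exact isLI_beta (hap_beta hstep) ih

/-- Local confluence of β. -/
lemma wcr {t a b : Trm} (h1 : Beta t a) (h2 : Beta t b) :
    ∃ d, BetaStar a d ∧ BetaStar b d := by
  induction h1 generalizing b with
  | @beta u v =>
    cases h2 with
    | beta => exact ⟨subst u 0 v, ReflTransGen.refl, ReflTransGen.refl⟩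
    | appL h3 =>
      cases h3 with
      | lam h4 =>
        exact ⟨_, ReflTransGen.single (beta_subst_left h4 v 0), ReflTransGen.single Beta.beta⟩
    | appR h3 =>
      exact ⟨_, (beta_subst_right h3 u 0).1, ReflTransGen.single Beta.beta⟩
  | @appL p p' q h1 ih =>
    cases h2 with
    | beta =>
      cases h1 with
      | lam h4 =>
        exact ⟨_, ReflTransGen.single Beta.beta, ReflTransGen.single (beta_subst_left h4 q 0)⟩
    | appL h3 =>
      obtain ⟨d0, hd1, hd2⟩ := ih h3
      exact ⟨.app d0 q, betaStar_appL hd1 q, betaStar_appL hd2 q⟩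
    | appR h3 =>
      exact ⟨.app p' _, ReflTransGen.single (Beta.appR h3), ReflTransGen.single (Beta.appL h1)⟩
  | @appR p q q' h1 ih =>
    cases h2 with
    | beta =>
      exact ⟨_, ReflTransGen.single Beta.beta, (beta_subst_right h1 _ 0).1⟩
    | appL h3 =>
      exact ⟨.app _ q', ReflTransGen.single (Beta.appL h3), ReflTransGen.single (Beta.appR h1)⟩
    | appR h3 =>
      obtain ⟨d0, hd1, hd2⟩ := ih h3
      exact ⟨.app p d0, betaStar_appR hd1 p, betaStar_appR hd2 p⟩
  | @lam u u' h1 ih =>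
    cases h2 with
    | lam h3 =>
      obtain ⟨d0, hd1, hd2⟩ := ih h3
      exact ⟨.lam d0, betaStar_lam hd1, betaStar_lam hd2⟩

/-- Newman's lemma, at an SN point. -/
lemma newman : ∀ a : Trm, Acc (TransGen (fun x y => Beta y x)) a →
    ∀ b c, BetaStar a b → BetaStar a c → ∃ d, BetaStar b d ∧ BetaStar c d := by
  intro a hacc
  induction hacc with
  | intro a ha ih =>
    intro b c hab hac
    rcases hab.cases_head with rfl | ⟨b1, hb1, hb1b⟩
    · exact ⟨c, hac, ReflTransGen.refl⟩
    rcases hac.cases_head with rfl | ⟨c1, hc1, hc1c⟩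
    · exact ⟨b, ReflTransGen.refl, hab⟩
    obtain ⟨d0, hbd0, hcd0⟩ := wcr hb1 hc1
    obtain ⟨e, hbe, hd0e⟩ := ih b1 (TransGen.single hb1) b d0 hb1b hbd0
    obtain ⟨f, hcf, hef⟩ := ih c1 (TransGen.single hc1) c e hc1c (hcd0.trans hd0e)
    exact ⟨f, hbe.trans hef, hcf⟩

lemma normal_star_eq {N L : Trm} (hN : BetaNormal N) (h : BetaStar N L) : L = N := by
  rcases h.cases_head with rfl | ⟨x, hx, _⟩
  · rfl
  · exact absurd hx (hN x)

lemma lam_star {u : Trm} {X : Trm} (h : BetaStar (.lam u) X) : ∃ w, X = .lam w := by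
  induction h with
  | refl => exact ⟨u, rfl⟩
  | tail _ hstep ih =>
    obtain ⟨w, rfl⟩ := ih
    cases hstep with
    | lam h => exact ⟨_, rfl⟩

def NeverLam (M : Trm) : Prop := ∀ u, ¬ BetaStar M (.lam u)

lemma neverLam_of {M N : Trm} (hsn : SNA M) (hnf : BetaStar M N) (hN : BetaNormal N)
    (hnl : ∀ u, N ≠ .lam u) : NeverLam M := by
  intro u hM
  obtain ⟨d, h1, h2⟩ := newman M (Acc.transGen hsn) _ _ hM hnf
  rw [normal_star_eq hN h2] at h1
  obtain ⟨w, hw⟩ := lam_star h1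
  exact hnl w hw

lemma appSN : ∀ M1, SNA M1 → ∀ M2, SNA M2 → NeverLam M1 → SNA (.app M1 M2) := by
  intro M1 h1
  induction h1 with
  | intro a ha ih1 =>
    intro M2 h2
    induction h2 with
    | intro b hb ih2 =>
      intro hnl
      constructor
      intro r hr
      cases hr with
      | beta => exact absurd ReflTransGen.refl (hnl _)
      | appL h3 =>
        exact ih1 _ h3 b (Acc.intro b hb)
          (fun u hu => hnl u (ReflTransGen.head h3 hu))
      | appR h3 => exact ih2 _ h3 hnl
open Trm Relation

/-- Kashima's standard reduction relation. -/
inductive St : Trm → Trm → Prop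
  | var {M : Trm} {n : ℕ} : HapStar M (.var n) → St M (.var n)
  | app {M M1 M2 N1 N2 : Trm} :
      HapStar M (.app M1 M2) → St M1 N1 → St M2 N2 → St M (.app N1 N2)
  | lam {M M' N' : Trm} : HapStar M (.lam M') → St M' N' → St M (.lam N')

lemma st_refl : ∀ M, St M M := by
  intro M
  induction M with
  | var n => exact St.var ReflTransGen.refl
  | app a b iha ihb => exact St.app ReflTransGen.refl iha ihb
  | lam a ih => exact St.lam ReflTransGen.refl ih

lemma hapStar_st {M M' N : Trm} (h : HapStar M M') (h2 : St M' N) : St M N := by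
  cases h2 with
  | var h3 => exact St.var (h.trans h3)
  | app h3 h4 h5 => exact St.app (h.trans h3) h4 h5
  | lam h3 h4 => exact St.lam (h.trans h3) h4

lemma hap_subst {a a' : Trm} (h : Hap a a') : ∀ (k : ℕ) (v : Trm),
    Hap (subst a k v) (subst a' k v) := by
  induction h with
  | @beta u w =>
    intro k v
    have e : subst (subst u 0 w) k v = subst (subst u (k+1) v) 0 (subst w k v) := by
      simpa using subst_subst (by omega : 0 ≤ k) w v u
    rw [e]
    exact (by simpa [Trm.subst] using Hap.beta :
      Hap (subst (Trm.app (Trm.lam u) w) k v) (subst (subst u (k+1) v) 0 (subst w k v)))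
  | app _ ih =>
    intro k v
    simp only [Trm.subst]
    exact Hap.app (ih k v)

lemma hap_lift {a a' : Trm} (h : Hap a a') : ∀ d, Hap (lift d a) (lift d a') := by
  induction h with
  | @beta u v =>
    intro d
    have e : lift d (subst u 0 v) = subst (lift (d+1) u) 0 (lift d v) := by
      simpa using lift_subst (by omega : 0 ≤ d) v u
    rw [e]
    exact (by simpa [Trm.lift] using Hap.beta :
      Hap (lift d (Trm.app (Trm.lam u) v)) (subst (lift (d+1) u) 0 (lift d v)))
  | app _ ih =>
    intro d
    simp only [Trm.lift]
    exact Hap.app (ih d)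

lemma hapStar_subst {a a' : Trm} (h : HapStar a a') (k : ℕ) (v : Trm) :
    HapStar (subst a k v) (subst a' k v) :=
  ReflTransGen.lift (fun x => subst x k v) (fun _ _ hb => hap_subst hb k v) _ _ h

lemma hapStar_lift {a a' : Trm} (h : HapStar a a') (d : ℕ) :
    HapStar (lift d a) (lift d a') :=
  ReflTransGen.lift (fun x => lift d x) (fun _ _ hb => hap_lift hb d) _ _ h

lemma hapStar_appL {a a' : Trm} (h : HapStar a a') (b : Trm) :
    HapStar (.app a b) (.app a' b) :=
  ReflTransGen.lift (fun x => Trm.app x b) (fun _ _ hb => Hap.app hb) _ _ h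

lemma st_lift {A B : Trm} (h : St A B) : ∀ d, St (lift d A) (lift d B) := by
  induction h with
  | @var M n h =>
    intro d
    have h2 := hapStar_lift h d
    rcases lt_or_ge n d with h1 | h1
    · rw [lift_var_lt h1] at h2 ⊢
      exact St.var h2
    · rw [lift_var_ge h1] at h2 ⊢
      exact St.var h2
  | app hM _ _ ih1 ih2 =>
    intro d
    simp only [Trm.lift]
    exact St.app (by simpa [Trm.lift] using hapStar_lift hM d) (ih1 d) (ih2 d)
  | lam hM _ ih =>
    intro d
    simp only [Trm.lift]
    exact St.lam (by simpa [Trm.lift] using hapStar_lift hM d) (ih (d+1))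

lemma st_liftTimes {A B : Trm} (h : St A B) (k : ℕ) : St (liftTimes k A) (liftTimes k B) := by
  induction k with
  | zero => exact h
  | succ k ih => rw [liftTimes_succ, liftTimes_succ]; exact st_lift ih 0

lemma st_subst {A B : Trm} (h : St A B) : ∀ {C D : Trm}, St C D → ∀ k,
    St (subst A k C) (subst B k D) := by
  induction h with
  | @var M n h =>
    intro C D hCD k
    have h2 := hapStar_subst h k C
    rcases lt_trichotomy n k with h1 | rfl | h1
    · rw [subst_var_lt _ h1] at h2
      rw [subst_var_lt _ h1]
      exact St.var h2
    · rw [subst_var_eq] at h2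
      rw [subst_var_eq]
      exact hapStar_st h2 (st_liftTimes hCD n)
    · rw [subst_var_gt _ h1] at h2
      rw [subst_var_gt _ h1]
      exact St.var h2
  | app hM _ _ ih1 ih2 =>
    intro C D hCD k
    simp only [Trm.subst]
    exact St.app (by simpa [Trm.subst] using hapStar_subst hM k C) (ih1 hCD k) (ih2 hCD k)
  | lam hM _ ih =>
    intro C D hCD k
    simp only [Trm.subst]
    exact St.lam (by simpa [Trm.subst] using hapStar_subst hM k C) (ih hCD (k+1))

lemma st_key {M N : Trm} (h : St M N) : ∀ {L : Trm}, Beta N L → St M L := by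
  induction h with
  | var h =>
    intro L hb
    cases hb
  | @app M M1 M2 N1 N2 hM h1 h2 ih1 ih2 =>
    intro L hb
    cases hb with
    | beta =>
      cases h1 with
      | lam hM1 h1' =>
        refine hapStar_st ?_ (st_subst h1' h2 0)
        exact ReflTransGen.tail (hM.trans (hapStar_appL hM1 M2)) Hap.beta
    | appL h3 => exact St.app hM (ih1 h3) h2
    | appR h3 => exact St.app hM h1 (ih2 h3)
  | lam hM h1 ih =>
    intro L hb
    cases hb with
    | lam h3 => exact St.lam hM (ih h3)

/-- Standardization (Kashima). -/
lemma std {M N : Trm} (h : BetaStar M N) : St M N := by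
  induction h with
  | refl => exact st_refl M
  | tail _ hstep ih => exact st_key ih hstep

lemma hapStar_betaStar {a a' : Trm} (h : HapStar a a') : BetaStar a a' := by
  induction h with
  | refl => exact ReflTransGen.refl
  | tail _ hstep ih => exact ReflTransGen.tail ih (hap_beta hstep)

lemma st_betaStar {M N : Trm} (h : St M N) : BetaStar M N := by
  induction h with
  | var h => exact hapStar_betaStar h
  | app hM _ _ ih1 ih2 =>
    exact (hapStar_betaStar hM).trans ((betaStar_appL ih1 _).trans (betaStar_appR ih2 _))
  | lam hM _ ih => exact (hapStar_betaStar hM).trans (betaStar_lam ih)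

/-- Weakly normalizing λI terms are strongly normalizing (via standardization). -/
lemma stSN {M N : Trm} (h : St M N) : IsLI M → BetaNormal N → SNA M := by
  induction h with
  | @var M n h => exact fun hM _ => hapStar_sn h hM (snVar n)
  | @app M M1 M2 N1 N2 hM h1 h2 ih1 ih2 =>
    intro hM' hN
    have hMM : IsLI (.app M1 M2) := hapStar_isLI hM hM'
    obtain ⟨hM1, hM2⟩ : IsLI M1 ∧ IsLI M2 := by
      cases hMM with | app a b => exact ⟨a, b⟩
    have hN1 : BetaNormal N1 := fun u hu => hN _ (Beta.appL hu)
    have hN2 : BetaNormal N2 := fun u hu => hN _ (Beta.appR hu)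
    have hnl : ∀ u, N1 ≠ .lam u := by
      intro u he
      exact hN _ (by rw [he]; exact Beta.beta)
    have s1 := ih1 hM1 hN1
    have s2 := ih2 hM2 hN2
    have hnl' : NeverLam M1 := neverLam_of s1 (st_betaStar h1) hN1 hnl
    exact hapStar_sn hM hM' (appSN M1 s1 M2 s2 hnl')
  | @lam M M' N' hM h1 ih =>
    intro hMI hN
    have hMl : IsLI (.lam M') := hapStar_isLI hM hMI
    obtain hM'' : IsLI M' := by cases hMl with | lam a b => exact a
    have hN' : BetaNormal N' := fun u hu => hN _ (Beta.lam hu)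
    exact hapStar_sn hM hMI (snLam (ih hM'' hN'))

/-- `StronglyNormalizable` is equivalent to accessibility. -/
lemma sn_iff_acc (t : Trm) : StronglyNormalizable t ↔ SNA t := by
  constructor
  · intro hSN
    by_contra hA
    have claim : ∀ x : Trm, ¬ SNA x → ∃ y, Beta x y ∧ ¬ SNA y := by
      intro x hx
      by_contra hc
      push_neg at hc
      exact hx ⟨x, fun y hy => hc y hy⟩
    let f : ℕ → {x : Trm // ¬ SNA x} := fun n => Nat.rec ⟨t, hA⟩
      (fun _ p => ⟨Classical.choose (claim p.1 p.2),
        (Classical.choose_spec (claim p.1 p.2)).2⟩) n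
    exact hSN ⟨fun n => (f n).1, rfl,
      fun n => (Classical.choose_spec (claim (f n).1 (f n).2)).1⟩
  · intro hA
    rintro ⟨f, h0, hstep⟩
    have key : ∀ x : Trm, SNA x → ∀ n, f n = x → False := by
      intro x hx
      induction hx with
      | intro x hx ih =>
        intro n hn
        exact ih (f (n+1)) (hn ▸ hstep n) (n+1) rfl
    exact key t ((h0 : f 0 = t) ▸ hA) 0 h0

lemma sna_wn {t : Trm} (h : SNA t) : ∃ u, BetaStar t u ∧ BetaNormal u := by
  induction h with
  | intro x hx ih =>
    by_cases hnorm : BetaNormal x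
    · exact ⟨x, ReflTransGen.refl, hnorm⟩
    · obtain ⟨u, hu⟩ : ∃ u, Beta x u := by
        by_contra hc
        push_neg at hc
        exact hnorm hc
      obtain ⟨w, hw1, hw2⟩ := ih u hu
      exact ⟨w, ReflTransGen.head hu hw1, hw2⟩
/-- a λI-term is strongly normalizable iff it is weakly normalizable. -/
theorem stmt1 (t : Trm) (ht : Trm.IsLI t) :
    StronglyNormalizable t ↔ ∃ u : Trm, BetaStar t u ∧ BetaNormal u := by
  constructor
  · intro hSN
    exact sna_wn ((sn_iff_acc t).mp hSN)
  · rintro ⟨u, hu, hnorm⟩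
    exact (sn_iff_acc t).mpr (stSN (std hu) ht hnorm)
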